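/- arXiv:2209.08566 — 4 statements merged into one kernel-verified Lean document; each statement's English description precedes it below -/
import Mathlib

section
/- Let L be a lattice and L₀ a sublattice of L such that for every a ∈ L, the set {b ∈ L₀ : b ≤ a} has a maximum and the set {b ∈ L₀ : a ≤ b} has a minimum (i.e., L₀ is relatively complete in L). Define ◻₀a := max{b ∈ L₀ : b ≤ a} and ◇₀a := min{b ∈ L₀ : a ≤ b}. Then (L, ∧, ∨, ◻₀, ◇₀) is an m-lattice with ◻₀L = ◇₀L = L₀. -/
theorem relativelyComplete_sublattice_gives_mLattice {L : Type*} [Lattice L]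
    (L₀ : Sublattice L) (box₀ dia₀ : L → L)
    (hmax : ∀ a : L, IsGreatest {b | b ∈ L₀ ∧ b ≤ a} (box₀ a))
    (hmin : ∀ a : L, IsLeast {b | b ∈ L₀ ∧ a ≤ b} (dia₀ a)) :
    (∀ a, box₀ a ⊓ a = box₀ a) ∧
    (∀ a, dia₀ a ⊔ a = dia₀ a) ∧
    (∀ a b, box₀ (a ⊓ b) = box₀ a ⊓ box₀ b) ∧
    (∀ a b, dia₀ (a ⊔ b) = dia₀ a ⊔ dia₀ b) ∧
    (∀ a, box₀ (dia₀ a) = dia₀ a) ∧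
    (∀ a, dia₀ (box₀ a) = box₀ a) ∧
    Set.range box₀ = (L₀ : Set L) ∧
    Set.range dia₀ = (L₀ : Set L) := by
  have bmem : ∀ a, box₀ a ∈ L₀ := fun a => (hmax a).1.1
  have ble : ∀ a, box₀ a ≤ a := fun a => (hmax a).1.2
  have dmem : ∀ a, dia₀ a ∈ L₀ := fun a => (hmin a).1.1
  have dle : ∀ a, a ≤ dia₀ a := fun a => (hmin a).1.2
  have bfix : ∀ b, b ∈ L₀ → box₀ b = b := fun b hb =>
    le_antisymm (ble b) ((hmax b).2 ⟨hb, le_rfl⟩)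
  have dfix : ∀ b, b ∈ L₀ → dia₀ b = b := fun b hb =>
    le_antisymm ((hmin b).2 ⟨hb, le_rfl⟩) (dle b)
  refine ⟨fun a => inf_eq_left.2 (ble a), fun a => sup_eq_left.2 (dle a),
    fun a b => le_antisymm
      (le_inf ((hmax a).2 ⟨bmem _, (ble _).trans inf_le_left⟩)
        ((hmax b).2 ⟨bmem _, (ble _).trans inf_le_right⟩))
      ((hmax (a ⊓ b)).2 ⟨L₀.infClosed (bmem a) (bmem b),
        inf_le_inf (ble a) (ble b)⟩),
    fun a b => le_antisymm
      ((hmin (a ⊔ b)).2 ⟨L₀.supClosed (dmem a) (dmem b),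
        sup_le_sup (dle a) (dle b)⟩)
      (sup_le ((hmin a).2 ⟨dmem _, le_sup_left.trans (dle _)⟩)
        ((hmin b).2 ⟨dmem _, le_sup_right.trans (dle _)⟩)),
    fun a => bfix _ (dmem a), fun a => dfix _ (bmem a),
    Set.eq_of_subset_of_subset (Set.range_subset_iff.2 bmem)
      (fun b hb => ⟨b, bfix b hb⟩),
    Set.eq_of_subset_of_subset (Set.range_subset_iff.2 dmem)
      (fun b hb => ⟨b, dfix b hb⟩)⟩
end

section
/- Let A be a residuated lattice (FLe-algebra): a commutative monoid (A, ·, e) on a lattice with a residuum → satisfying a·b ≤ c ⟺ a ≤ b → c. Suppose ◻, ◇ : A → A make A an m-lattice and satisfy ◻(◻a ⋆ ◻b) = ◻a ⋆ ◻b for each of the operations ⋆ ∈ {∧, ∨, ·, →}, and ◻e = e, ◻f = f for the constants. Then ◻(a → ◻b) = ◇a → ◻b for all a, b ∈ A. -/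
theorem mFLe_L6_box {A : Type*} [Lattice A] (mul himp : A → A → A) (e f : A)
    (box dia : A → A)
    (hassoc : ∀ a b c : A, mul (mul a b) c = mul a (mul b c))
    (hcomm : ∀ a b : A, mul a b = mul b a)
    (hunit : ∀ a : A, mul a e = a)
    (hres : ∀ a b c : A, mul a b ≤ c ↔ a ≤ himp b c)
    (hbox1 : ∀ a, box a ⊓ a = box a)
    (hdia1 : ∀ a, dia a ⊔ a = dia a)
    (hbox2 : ∀ a b, box (a ⊓ b) = box a ⊓ box b)
    (hdia2 : ∀ a b, dia (a ⊔ b) = dia a ⊔ dia b)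
    (hbox3 : ∀ a, box (dia a) = dia a)
    (hdia3 : ∀ a, dia (box a) = box a)
    (hinf : ∀ a b, box (box a ⊓ box b) = box a ⊓ box b)
    (hsup : ∀ a b, box (box a ⊔ box b) = box a ⊔ box b)
    (hmul : ∀ a b, box (mul (box a) (box b)) = mul (box a) (box b))
    (himpbox : ∀ a b, box (himp (box a) (box b)) = himp (box a) (box b))
    (he : box e = e)
    (hf : box f = f) :
    ∀ a b : A, box (himp a (box b)) = himp (dia a) (box b) := by
  -- basic monotonicity facts
  have box_le : ∀ a : A, box a ≤ a := fun a => inf_eq_left.mp (hbox1 a)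
  have le_dia : ∀ a : A, a ≤ dia a := fun a => sup_eq_right.mp (sup_comm (dia a) a ▸ hdia1 a)
  have box_mono : ∀ {a b : A}, a ≤ b → box a ≤ box b := by
    intro a b h
    have : box (a ⊓ b) = box a := by rw [inf_eq_left.mpr h]
    calc box a = box a ⊓ box b := by rw [← hbox2, this]
    _ ≤ box b := inf_le_right
  have dia_mono : ∀ {a b : A}, a ≤ b → dia a ≤ dia b := by
    intro a b h
    have : dia (a ⊔ b) = dia b := by rw [sup_eq_right.mpr h]
    calc dia a ≤ dia a ⊔ dia b := le_sup_left
    _ = dia b := by rw [← hdia2, this]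
  have mul_mono_l : ∀ {x y : A} (z : A), x ≤ y → mul x z ≤ mul y z := by
    intro x y z h
    exact (hres x z (mul y z)).mpr (le_trans h ((hres y z (mul y z)).mp le_rfl))
  intro a b
  apply le_antisymm
  · -- box (a → box b) ≤ dia a → box b
    set C := box (himp a (box b)) with hC
    have h1 : mul C a ≤ box b := by
      have : mul (himp a (box b)) a ≤ box b := (hres _ _ _).mpr le_rfl
      exact le_trans (mul_mono_l a (box_le _)) this
    have h2 : a ≤ himp C (box b) := (hres a C (box b)).mp (by rw [hcomm]; exact h1)
    have hfix : box (himp C (box b)) = himp C (box b) := himpbox (himp a (box b)) b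
    have h3 : dia a ≤ himp C (box b) := by
      have := dia_mono h2
      rwa [← hfix, hdia3, hfix] at this
    have h4 : mul (dia a) C ≤ box b := (hres _ _ _).mpr h3
    exact (hres C (dia a) (box b)).mp (by rw [hcomm]; exact h4)
  · -- dia a → box b ≤ box (a → box b)
    have hfix2 : box (himp (dia a) (box b)) = himp (dia a) (box b) := by
      have := himpbox (dia a) b
      rwa [hbox3] at this
    have hle : himp (dia a) (box b) ≤ himp a (box b) := by
      refine (hres _ _ _).mp ?_
      rw [hcomm]
      refine le_trans (mul_mono_l _ (le_dia a)) ?_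
      rw [hcomm]
      exact (hres _ _ _).mpr le_rfl
    calc himp (dia a) (box b) = box (himp (dia a) (box b)) := hfix2.symm
    _ ≤ box (himp a (box b)) := box_mono hle
end

section
/- Let A be a residuated lattice (FLe-algebra) with m-lattice operations ◻, ◇ satisfying ◻(◻a ⋆ ◻b) = ◻a ⋆ ◻b for each operation ⋆ ∈ {∧, ∨, ·, →} and ◻e = e, ◻f = f. Then ◻(◻a → b) = ◻a → ◻b for all a, b ∈ A. -/
theorem mFLe_L6_dia {A : Type*} [Lattice A] (mul himp : A → A → A) (e f : A)
    (box dia : A → A)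
    (hassoc : ∀ a b c : A, mul (mul a b) c = mul a (mul b c))
    (hcomm : ∀ a b : A, mul a b = mul b a)
    (hunit : ∀ a : A, mul a e = a)
    (hres : ∀ a b c : A, mul a b ≤ c ↔ a ≤ himp b c)
    (hbox1 : ∀ a, box a ⊓ a = box a)
    (hdia1 : ∀ a, dia a ⊔ a = dia a)
    (hbox2 : ∀ a b, box (a ⊓ b) = box a ⊓ box b)
    (hdia2 : ∀ a b, dia (a ⊔ b) = dia a ⊔ dia b)
    (hbox3 : ∀ a, box (dia a) = dia a)
    (hdia3 : ∀ a, dia (box a) = box a)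
    (hinf : ∀ a b, box (box a ⊓ box b) = box a ⊓ box b)
    (hsup : ∀ a b, box (box a ⊔ box b) = box a ⊔ box b)
    (hmul : ∀ a b, box (mul (box a) (box b)) = mul (box a) (box b))
    (himpbox : ∀ a b, box (himp (box a) (box b)) = himp (box a) (box b))
    (he : box e = e)
    (hf : box f = f) :
    ∀ a b : A, box (himp (box a) b) = himp (box a) (box b) := by
  have hle : ∀ a, box a ≤ a := fun a => (hbox1 a) ▸ inf_le_right
  have hmono : ∀ a b : A, a ≤ b → box a ≤ box b := by
    intro a b h
    have : a ⊓ b = a := inf_eq_left.mpr h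
    have := hbox2 a b
    rw [‹a ⊓ b = a›] at this
    exact this ▸ inf_le_right
  have hidem : ∀ a, box (box a) = box a := fun a => by
    rw [← hdia3 a, hbox3]
  intro a b
  apply le_antisymm
  · -- box(himp(box a, b)) ≤ himp(box a, box b)
    set u := box (himp (box a) b) with hu
    rw [← hres]
    have hfix : box (mul u (box a)) = mul u (box a) := hmul (himp (box a) b) a
    have h1 : mul u (box a) ≤ b := (hres u (box a) b).mpr (hle _)
    calc mul u (box a) = box (mul u (box a)) := hfix.symm
      _ ≤ box b := hmono _ _ h1
  · have h2 : himp (box a) (box b) ≤ himp (box a) b := by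
      rw [← hres]
      exact le_trans ((hres _ _ _).mpr le_rfl) (hle b)
    calc himp (box a) (box b) = box (himp (box a) (box b)) := (himpbox a b).symm
      _ ≤ box (himp (box a) b) := hmono _ _ h2
end

section
/- Let L be a lattice, L₀ a relatively complete sublattice, and define ◻₀a := max{b ∈ L₀ : b ≤ a}, ◇₀a := min{b ∈ L₀ : a ≤ b}. Then the constructions 'take image of ◻' and 'induce ◻₀, ◇₀ from a relatively complete sublattice' are mutually inverse: starting from an m-lattice (L, ◻, ◇), the operations induced by the relatively complete sublattice ◻L coincide with ◻ and ◇; and starting from a relatively complete sublattice L₀, the image of ◻₀ is exactly L₀. -/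
theorem mLattice_relativelyComplete_correspondence {L : Type*} [Lattice L] :
    ((∀ (box dia : L → L),
      (∀ a, box a ⊓ a = box a) →
      (∀ a, dia a ⊔ a = dia a) →
      (∀ a b, box (a ⊓ b) = box a ⊓ box b) →
      (∀ a b, dia (a ⊔ b) = dia a ⊔ dia b) →
      (∀ a, box (dia a) = dia a) →
      (∀ a, dia (box a) = box a) →
      ∀ a : L, IsGreatest {b | b ∈ Set.range box ∧ b ≤ a} (box a) ∧
        IsLeast {b | b ∈ Set.range box ∧ a ≤ b} (dia a)) ∧
    (∀ (L₀ : Sublattice L) (box₀ dia₀ : L → L),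
      (∀ a : L, IsGreatest {b | b ∈ L₀ ∧ b ≤ a} (box₀ a)) →
      (∀ a : L, IsLeast {b | b ∈ L₀ ∧ a ≤ b} (dia₀ a)) →
      Set.range box₀ = (L₀ : Set L))) := by
  constructor
  · intro box dia h1 h2 h3 h4 h5 h6 a
    have boxle : ∀ x, box x ≤ x := fun x => by
      rw [← h1 x]; exact inf_le_right
    have lediam : ∀ x, x ≤ dia x := fun x => by
      rw [← h2 x]; exact le_sup_right
    have boxmono : ∀ x y, x ≤ y → box x ≤ box y := fun x y hxy => by
      have : box (x ⊓ y) = box x ⊓ box y := h3 x y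
      rw [inf_eq_left.mpr hxy] at this
      rw [this]; exact inf_le_right
    have diamono : ∀ x y, x ≤ y → dia x ≤ dia y := fun x y hxy => by
      have : dia (x ⊔ y) = dia x ⊔ dia y := h4 x y
      rw [sup_eq_right.mpr hxy] at this
      rw [this]; exact le_sup_left
    have boxidem : ∀ x, box (box x) = box x := fun x => by
      rw [← h6 x, h5]
    refine ⟨⟨⟨⟨a, rfl⟩, boxle a⟩, ?_⟩, ⟨⟨⟨dia a, by rw [h5]⟩, lediam a⟩, ?_⟩⟩
    · rintro b ⟨⟨c, rfl⟩, hba⟩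
      calc box c = box (box c) := (boxidem c).symm
        _ ≤ box a := boxmono _ _ hba
    · rintro b ⟨⟨c, rfl⟩, hab⟩
      calc dia a ≤ dia (box c) := diamono _ _ hab
        _ = box c := h6 c
  · intro L₀ box₀ dia₀ hbox hdia
    ext b
    constructor
    · rintro ⟨a, rfl⟩
      exact (hbox a).1.1
    · intro hb
      refine ⟨b, le_antisymm ((hbox b).1.2) ((hbox b).2 ⟨hb, le_refl b⟩)⟩
end
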